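/- Let G ⊆ ℕ^n and let [G] be the smallest submonoid of (ℕ^n, +) containing G that is closed under componentwise infima. Then [G] = { g₁ ∧ ⋯ ∧ g_m : m ∈ ℕ, g₁,…,g_m ∈ ⟨G⟩ }, where ⟨G⟩ is the additive submonoid generated by G. -/

import Mathlib

/-- `[G]`: the smallest submonoid of `ℕ^n` containing `G` closed under componentwise infima. -/
def goodClosure {n : ℕ} (G : Set (Fin n → ℕ)) : Set (Fin n → ℕ) :=
  ⋂₀ {M | G ⊆ M ∧ 0 ∈ M ∧ (∀ a ∈ M, ∀ b ∈ M, a + b ∈ M) ∧ ∀ a ∈ M, ∀ b ∈ M, a ⊓ b ∈ M}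

private lemma inf'_add_inf' {n : ℕ} (t u : Finset (Fin n → ℕ)) (ht : t.Nonempty)
    (hu : u.Nonempty) :
    t.inf' ht id + u.inf' hu id =
      ((t ×ˢ u).image fun p => p.1 + p.2).inf' ((ht.product hu).image _) id := by
  rw [Finset.inf'_image]
  funext i
  simp only [Pi.add_apply, Finset.inf'_apply, Function.comp, id]
  apply le_antisymm
  · apply Finset.le_inf'
    rintro ⟨a, b⟩ hab
    rw [Finset.mem_product] at hab
    exact add_le_add (Finset.inf'_le _ hab.1) (Finset.inf'_le _ hab.2)
  · obtain ⟨a, ha, hae⟩ := Finset.exists_mem_eq_inf' ht (fun a => a i)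
    obtain ⟨b, hb, hbe⟩ := Finset.exists_mem_eq_inf' hu (fun a => a i)
    rw [hae, hbe]
    exact Finset.inf'_le _ (show (a, b) ∈ t ×ˢ u from Finset.mem_product.2 ⟨ha, hb⟩)

theorem goodClosure_eq_infs_of_sums {n : ℕ} (G : Set (Fin n → ℕ)) :
    goodClosure G =
      { x | ∃ (m : ℕ) (g : Fin (m + 1) → Fin n → ℕ),
          (∀ i, g i ∈ AddSubmonoid.closure G) ∧
          x = Finset.univ.inf' Finset.univ_nonempty g } := by
  set S : Set (Fin n → ℕ) := {x | ∃ (t : Finset (Fin n → ℕ)) (ht : t.Nonempty),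
      (∀ y ∈ t, y ∈ AddSubmonoid.closure G) ∧ x = t.inf' ht id} with hS
  have hRS : { x | ∃ (m : ℕ) (g : Fin (m + 1) → Fin n → ℕ),
          (∀ i, g i ∈ AddSubmonoid.closure G) ∧
          x = Finset.univ.inf' Finset.univ_nonempty g } = S := by
    ext x
    constructor
    · rintro ⟨m, g, hg, rfl⟩
      refine ⟨Finset.univ.image g, Finset.univ_nonempty.image g, ?_, ?_⟩
      · intro y hy
        obtain ⟨i, _, rfl⟩ := Finset.mem_image.1 hy
        exact hg i
      · rw [Finset.inf'_image]
        rfl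
    · rintro ⟨t, ht, hmem, rfl⟩
      obtain ⟨m, hm⟩ : ∃ m, t.card = m + 1 :=
        ⟨t.card - 1, (Nat.succ_pred_eq_of_pos (Finset.card_pos.2 ht)).symm⟩
      let e : Fin (m + 1) ≃ t := (Fintype.equivFinOfCardEq (by simpa using hm)).symm
      refine ⟨m, fun i => (e i : Fin n → ℕ), fun i => hmem _ (e i).2, ?_⟩
      apply le_antisymm
      · apply Finset.le_inf'
        intro i _
        exact Finset.inf'_le _ (e i).2
      · apply Finset.le_inf'
        intro y hy
        obtain ⟨i, hi⟩ := e.surjective ⟨y, hy⟩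
        have h : (e i : Fin n → ℕ) = y := by rw [hi]
        exact h ▸ Finset.inf'_le _ (Finset.mem_univ i)
  rw [hRS]
  apply subset_antisymm
  · intro x hx
    apply hx
    refine ⟨?_, ?_, ?_, ?_⟩
    · intro g hg
      refine ⟨{g}, Finset.singleton_nonempty g, ?_, by simp⟩
      intro y hy
      rw [Finset.mem_singleton] at hy
      exact hy ▸ AddSubmonoid.subset_closure hg
    · exact ⟨{0}, Finset.singleton_nonempty 0, by
        intro y hy; rw [Finset.mem_singleton] at hy
        exact hy ▸ (AddSubmonoid.closure G).zero_mem, by simp⟩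
    · rintro a ⟨t, ht, hmem, rfl⟩ b ⟨u, hu, humem, rfl⟩
      refine ⟨(t ×ˢ u).image fun p => p.1 + p.2, (ht.product hu).image _, ?_,
        inf'_add_inf' t u ht hu⟩
      intro y hy
      obtain ⟨⟨p, q⟩, hpq, rfl⟩ := Finset.mem_image.1 hy
      rw [Finset.mem_product] at hpq
      exact add_mem (hmem _ hpq.1) (humem _ hpq.2)
    · rintro a ⟨t, ht, hmem, rfl⟩ b ⟨u, hu, humem, rfl⟩
      refine ⟨t ∪ u, ht.mono Finset.subset_union_left, ?_, ?_⟩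
      · intro y hy
        rcases Finset.mem_union.1 hy with h | h
        exacts [hmem _ h, humem _ h]
      · rw [Finset.inf'_union ht hu]
  · rintro x ⟨t, ht, hmem, rfl⟩
    rintro M ⟨hG, h0, hadd, hinf⟩
    have hclos : ∀ y ∈ AddSubmonoid.closure G, y ∈ M := by
      intro y hy
      induction hy using AddSubmonoid.closure_induction with
      | mem z hz => exact hG hz
      | zero => exact h0
      | add a b _ _ ha hb => exact hadd a ha b hb
    induction ht using Finset.Nonempty.cons_induction with
    | singleton a => simpa using hclos a (hmem a (by simp))
    | cons a s ha hs ih =>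
      rw [Finset.inf'_cons (H := hs)]
      exact hinf _ (hclos a (hmem a (by simp))) _
        (ih fun y hy => hmem y (Finset.mem_cons_of_mem hy))
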